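/- Let U ⊆ ℝⁿ be open and let ψ : U → [0,∞) be a nonnegative function of class C². Then the function √ψ : U → ℝ is locally Lipschitz continuous, and the derivative of ψ is locally bounded by a multiple of √ψ: every x ∈ U has a neighborhood V ⊆ U and a constant c > 0 such that ‖Dψ(y)‖ ≤ c·√(ψ(y)) for all y ∈ V. -/

import Mathlib

open Filter Topology Metric

set_option maxHeartbeats 1000000 in
private lemma aux15 {n : ℕ} {U : Set (EuclideanSpace ℝ (Fin n))} (hU : IsOpen U)
    (ψ : EuclideanSpace ℝ (Fin n) → ℝ) (hψ0 : ∀ x ∈ U, 0 ≤ ψ x)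
    (hψC2 : ContDiffOn ℝ 2 ψ U) (x : EuclideanSpace ℝ (Fin n)) (hx : x ∈ U) :
    ∃ r > (0:ℝ), ∃ c > (0:ℝ), Metric.ball x r ⊆ U ∧
      (∀ y ∈ Metric.ball x r, ‖fderiv ℝ ψ y‖ ≤ c * Real.sqrt (ψ y)) ∧
      (∀ y ∈ Metric.ball x r, ∀ z ∈ Metric.ball x r,
        |Real.sqrt (ψ z) - Real.sqrt (ψ y)| ≤ c * ‖z - y‖) := by
  obtain ⟨ε, hε, hball⟩ : ∃ ε > 0, closedBall x ε ⊆ U :=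
    (Metric.nhds_basis_closedBall.mem_iff).1 (hU.mem_nhds hx)
  set r : ℝ := ε / 2 with hr
  have hr0 : 0 < r := by positivity
  set s : Set (EuclideanSpace ℝ (Fin n)) := closedBall x r with hs
  set s₂ : Set (EuclideanSpace ℝ (Fin n)) := closedBall x ε with hs2
  have hss2 : s ⊆ s₂ := closedBall_subset_closedBall (by linarith)
  have hs2U : s₂ ⊆ U := hball
  have hsU : s ⊆ U := hss2.trans hs2U
  set f' := fderiv ℝ ψ with hf'
  have hdiff : ∀ w ∈ U, DifferentiableAt ℝ ψ w := fun w hw =>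
    (hψC2.differentiableOn (by norm_num)).differentiableAt (hU.mem_nhds hw)
  have hf'C1 : ContDiffOn ℝ 1 f' U := hψC2.fderiv_of_isOpen hU (by norm_num)
  have hf'diff : ∀ w ∈ U, DifferentiableAt ℝ f' w := fun w hw =>
    (hf'C1.differentiableOn (by norm_num)).differentiableAt (hU.mem_nhds hw)
  have hf''cont : ContinuousOn (fderiv ℝ f') U :=
    hf'C1.continuousOn_fderiv_of_isOpen hU (le_refl _)
  have hcomp : IsCompact s₂ := isCompact_closedBall x ε
  obtain ⟨M0, hM0⟩ := hcomp.exists_bound_of_continuousOn (f := fderiv ℝ f') (hf''cont.mono hs2U)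
  obtain ⟨K0, hK0⟩ := hcomp.exists_bound_of_continuousOn (hψC2.continuousOn.mono hs2U)
  set M : ℝ := max M0 1 with hM
  set K : ℝ := max K0 1 with hK
  have hM1 : (1:ℝ) ≤ M := le_max_right _ _
  have hK1 : (1:ℝ) ≤ K := le_max_right _ _
  have hM0' : (0:ℝ) < M := by linarith
  have hK0' : (0:ℝ) < K := by linarith
  have hψK : ∀ w ∈ s₂, ψ w ≤ K := fun w hw =>
    le_trans (le_trans (le_abs_self _) (hK0 w hw)) (le_max_left _ _)
  -- Lipschitz bound for f' on s₂
  have hLip : ∀ a ∈ s₂, ∀ b ∈ s₂, ‖f' b - f' a‖ ≤ M * ‖b - a‖ := by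
    intro a ha b hb
    exact (convex_closedBall x ε).norm_image_sub_le_of_norm_fderiv_le
      (fun w hw => hf'diff w (hs2U hw))
      (fun w hw => le_trans (hM0 w hw) (le_max_left _ _))
      ha hb
  -- Taylor estimate
  have hTay : ∀ y ∈ s₂, ∀ z ∈ s₂, |ψ z - ψ y - f' y (z - y)| ≤ M * ‖z - y‖ * ‖z - y‖ := by
    intro y hy z hz
    set t : Set (EuclideanSpace ℝ (Fin n)) := s₂ ∩ closedBall y ‖z - y‖ with ht
    have hconv : Convex ℝ t := (convex_closedBall x ε).inter (convex_closedBall _ _)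
    have hyt : y ∈ t := ⟨hy, by simp⟩
    have hzt : z ∈ t := ⟨hz, by simp [mem_closedBall, dist_eq_norm]⟩
    have := hconv.norm_image_sub_le_of_norm_fderiv_le' (φ := f' y)
      (f := ψ) (C := M * ‖z - y‖)
      (fun w hw => hdiff w (hs2U hw.1))
      (fun w hw => by
        have h1 := hLip y hy w hw.1
        have h2 : ‖w - y‖ ≤ ‖z - y‖ := by
          have := hw.2; rw [mem_closedBall, dist_eq_norm] at this; exact this
        calc ‖f' w - f' y‖ ≤ M * ‖w - y‖ := h1
          _ ≤ M * ‖z - y‖ := by nlinarith [norm_nonneg (w - y)]) hyt hzt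
    simpa [Real.norm_eq_abs] using this
  -- key pointwise inequality
  have hkey : ∀ y ∈ s, ∀ v : EuclideanSpace ℝ (Fin n), ‖v‖ ≤ r →
      |f' y v| ≤ ψ y + M * ‖v‖ ^ 2 := by
    intro y hy v hv
    have hmem : ∀ w : EuclideanSpace ℝ (Fin n), ‖w‖ ≤ r → y + w ∈ s₂ := by
      intro w hw
      have h1 : dist (y + w) x ≤ dist (y + w) y + dist y x := dist_triangle _ _ _
      have h2 : dist (y + w) y = ‖w‖ := by simp [dist_eq_norm]
      have h3 : dist y x ≤ r := hy
      simp only [mem_closedBall, hs2]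
      rw [mem_closedBall] at *
      calc dist (y + w) x ≤ ‖w‖ + dist y x := by rw [← h2]; exact h1
        _ ≤ r + r := add_le_add hw h3
        _ = ε := by ring
    have hyU : y ∈ U := hsU hy
    have one_side : ∀ w : EuclideanSpace ℝ (Fin n), ‖w‖ ≤ r →
        -(f' y w) ≤ ψ y + M * ‖w‖ ^ 2 := by
      intro w hw
      have hzw : y + w ∈ s₂ := hmem w hw
      have h := hTay y (hss2 hy) (y + w) hzw
      have hsimp : (y + w) - y = w := by abel
      rw [hsimp] at h
      have h0 : 0 ≤ ψ (y + w) := hψ0 _ (hs2U hzw)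
      have := abs_le.1 h
      nlinarith [this.1, this.2]
    have h1 := one_side v hv
    have h2 := one_side (-v) (by simpa using hv)
    rw [map_neg] at h2
    simp only [norm_neg] at h2
    rw [abs_le]; constructor <;> nlinarith
  -- operator norm bound for each t
  have hop : ∀ y ∈ s, ∀ t : ℝ, 0 < t → t ≤ r → ‖f' y‖ ≤ ψ y / t + M * t := by
    intro y hy t ht htr
    have hψy : 0 ≤ ψ y := hψ0 y (hsU hy)
    apply ContinuousLinearMap.opNorm_le_bound _ (by positivity)
    intro v
    rcases eq_or_ne v 0 with rfl | hv0
    · simp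
    · have hv : (0:ℝ) < ‖v‖ := norm_pos_iff.2 hv0
      set w : EuclideanSpace ℝ (Fin n) := (t / ‖v‖) • v with hw
      have hwn : ‖w‖ = t := by
        rw [hw, norm_smul, Real.norm_eq_abs, abs_of_pos (div_pos ht hv),
          div_mul_cancel₀ _ hv.ne']
      have := hkey y hy w (by rw [hwn]; exact htr)
      rw [hwn] at this
      have hfw : f' y w = (t / ‖v‖) * f' y v := by rw [hw, map_smul]; rfl
      rw [hfw, abs_mul, abs_of_pos (div_pos ht hv)] at this
      have h4 := mul_le_mul_of_nonneg_left this (by positivity : (0:ℝ) ≤ ‖v‖ / t)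
      have h5 : |f' y v| ≤ (ψ y + M * t ^ 2) * (‖v‖ / t) := by
        calc |f' y v| = ‖v‖ / t * (t / ‖v‖ * |f' y v|) := by
              field_simp [ht.ne', hv.ne']
          _ ≤ ‖v‖ / t * (ψ y + M * t ^ 2) := h4
          _ = (ψ y + M * t ^ 2) * (‖v‖ / t) := mul_comm _ _
      have e : (ψ y + M * t ^ 2) * (‖v‖ / t) = (ψ y / t + M * t) * ‖v‖ := by
        field_simp [ht.ne', hv.ne']
      calc ‖f' y v‖ = |f' y v| := Real.norm_eq_abs _
        _ ≤ (ψ y + M * t ^ 2) * (‖v‖ / t) := h5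
        _ = (ψ y / t + M * t) * ‖v‖ := e
  -- gradient bound
  set c₁ : ℝ := Real.sqrt K / r + Real.sqrt K + M with hc₁
  have hsqK1 : (1:ℝ) ≤ Real.sqrt K := by
    rw [show (1:ℝ) = Real.sqrt 1 by simp]
    exact Real.sqrt_le_sqrt hK1
  have hc₁0 : 0 < c₁ := by positivity
  have hgrad : ∀ y ∈ s, ‖f' y‖ ≤ c₁ * Real.sqrt (ψ y) := by
    intro y hy
    have hψy : 0 ≤ ψ y := hψ0 y (hsU hy)
    rcases hψy.eq_or_lt with h0 | hpos
    · -- ψ y = 0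
      rw [← h0, Real.sqrt_zero, mul_zero]
      by_contra hcon
      push_neg at hcon
      set δ := ‖f' y‖ with hδ
      have hδ0 : 0 < δ := hcon
      set t : ℝ := min r (δ / (2 * M)) with htdef
      have ht0 : 0 < t := lt_min hr0 (by positivity)
      have := hop y hy t ht0 (min_le_left _ _)
      rw [← h0] at this
      have h1 : M * t ≤ δ / 2 := by
        have : t ≤ δ / (2 * M) := min_le_right _ _
        calc M * t ≤ M * (δ / (2 * M)) := by nlinarith
          _ = δ / 2 := by field_simp
      simp only [zero_div, zero_add] at this
      linarith
    · -- ψ y > 0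
      have hψyK : ψ y ≤ K := hψK y (hss2 hy)
      have hsq : 0 < Real.sqrt (ψ y) := Real.sqrt_pos.2 hpos
      have hsqle : Real.sqrt (ψ y) ≤ Real.sqrt K := Real.sqrt_le_sqrt hψyK
      have hsqK0 : (0:ℝ) < Real.sqrt K := by linarith
      have hsq2 : Real.sqrt (ψ y) ^ 2 = ψ y := Real.sq_sqrt hψy
      set t : ℝ := min r (Real.sqrt (ψ y) / Real.sqrt K) with htdef
      have ht0 : 0 < t := lt_min hr0 (by positivity)
      have hb := hop y hy t ht0 (min_le_left _ _)
      rcases le_total (Real.sqrt (ψ y) / Real.sqrt K) r with hcase | hcase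
      · have htv : t = Real.sqrt (ψ y) / Real.sqrt K := min_eq_right hcase
        rw [htv] at hb
        have e1 : ψ y / (Real.sqrt (ψ y) / Real.sqrt K) = Real.sqrt (ψ y) * Real.sqrt K := by
          rw [div_div_eq_mul_div, div_eq_iff hsq.ne']
          linear_combination (-Real.sqrt K) * hsq2
        have e2 : M * (Real.sqrt (ψ y) / Real.sqrt K) ≤ M * Real.sqrt (ψ y) := by
          apply mul_le_mul_of_nonneg_left _ hM0'.le
          rw [div_le_iff₀ hsqK0]
          nlinarith
        calc ‖f' y‖ ≤ ψ y / (Real.sqrt (ψ y) / Real.sqrt K)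
              + M * (Real.sqrt (ψ y) / Real.sqrt K) := hb
          _ ≤ Real.sqrt (ψ y) * Real.sqrt K + M * Real.sqrt (ψ y) := by rw [e1]; linarith
          _ ≤ c₁ * Real.sqrt (ψ y) := by
              rw [hc₁]
              have : 0 ≤ Real.sqrt K / r * Real.sqrt (ψ y) := by positivity
              nlinarith
      · have htv : t = r := min_eq_left hcase
        rw [htv] at hb
        have hrs : r * Real.sqrt K ≤ Real.sqrt (ψ y) := (le_div_iff₀ hsqK0).1 hcase
        have hrψ : r ≤ Real.sqrt (ψ y) := by nlinarith
        calc ‖f' y‖ ≤ ψ y / r + M * r := hb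
          _ ≤ Real.sqrt K / r * Real.sqrt (ψ y) + M * Real.sqrt (ψ y) := by
              have h2 : ψ y ≤ Real.sqrt K * Real.sqrt (ψ y) := by nlinarith
              have e1 : ψ y / r ≤ Real.sqrt K / r * Real.sqrt (ψ y) := by
                calc ψ y / r = ψ y * r⁻¹ := div_eq_mul_inv _ _
                  _ ≤ Real.sqrt K * Real.sqrt (ψ y) * r⁻¹ :=
                      mul_le_mul_of_nonneg_right h2 (by positivity)
                  _ = Real.sqrt K / r * Real.sqrt (ψ y) := by ring
              nlinarith
          _ ≤ c₁ * Real.sqrt (ψ y) := by rw [hc₁]; nlinarith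
  -- Lipschitz constant
  set c₂ : ℝ := max c₁ (max 1 M) with hc₂
  have hc₂0 : 0 < c₂ := lt_of_lt_of_le hc₁0 (le_max_left _ _)
  have hc₂1 : (1:ℝ) ≤ c₂ := le_trans (le_max_left _ _) (le_max_right _ _)
  have hc₂M : M ≤ c₂ := le_trans (le_max_right _ _) (le_max_right _ _)
  have hc₂c₁ : c₁ ≤ c₂ := le_max_left _ _
  have hlip : ∀ y ∈ s, ∀ z ∈ s,
      Real.sqrt (ψ z) ≤ Real.sqrt (ψ y) + c₂ * ‖z - y‖ := by
    intro y hy z hz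
    have hψy : 0 ≤ ψ y := hψ0 y (hsU hy)
    have hψz : 0 ≤ ψ z := hψ0 z (hsU hz)
    set d : ℝ := ‖z - y‖ with hd
    have hd0 : 0 ≤ d := norm_nonneg _
    have hT := hTay y (hss2 hy) z (hss2 hz)
    have hfb : f' y (z - y) ≤ ‖f' y‖ * d := by
      calc f' y (z - y) ≤ |f' y (z - y)| := le_abs_self _
        _ = ‖f' y (z - y)‖ := rfl
        _ ≤ ‖f' y‖ * ‖z - y‖ := (f' y).le_opNorm _
    have hg := hgrad y hy
    have hsq2 : Real.sqrt (ψ y) ^ 2 = ψ y := Real.sq_sqrt hψy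
    have habs := (abs_le.1 hT).2
    have hup : ψ z ≤ (Real.sqrt (ψ y) + c₂ * d) ^ 2 := by
      have hsqnn : 0 ≤ Real.sqrt (ψ y) := Real.sqrt_nonneg _
      have h1 : ‖f' y‖ * d ≤ c₁ * Real.sqrt (ψ y) * d := mul_le_mul_of_nonneg_right hg hd0
      have h2 : c₁ * Real.sqrt (ψ y) * d ≤ c₂ * Real.sqrt (ψ y) * d :=
        mul_le_mul_of_nonneg_right (mul_le_mul_of_nonneg_right hc₂c₁ hsqnn) hd0
      have hM2 : M ≤ c₂ ^ 2 := by nlinarith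
      have h3 : M * (d * d) ≤ c₂ ^ 2 * (d * d) :=
        mul_le_mul_of_nonneg_right hM2 (mul_self_nonneg d)
      have hexp : (Real.sqrt (ψ y) + c₂ * d) ^ 2
          = ψ y + 2 * (c₂ * Real.sqrt (ψ y) * d) + c₂ ^ 2 * (d * d) := by
        linear_combination hsq2
      rw [hexp]
      have hnn : 0 ≤ c₂ * Real.sqrt (ψ y) * d := mul_nonneg (mul_nonneg hc₂0.le hsqnn) hd0
      linarith
    calc Real.sqrt (ψ z) ≤ Real.sqrt ((Real.sqrt (ψ y) + c₂ * d) ^ 2) :=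
          Real.sqrt_le_sqrt hup
      _ = Real.sqrt (ψ y) + c₂ * d :=
          Real.sqrt_sq (add_nonneg (Real.sqrt_nonneg _) (mul_nonneg hc₂0.le hd0))
  refine ⟨r, hr0, c₂, hc₂0, (ball_subset_closedBall).trans hsU, ?_, ?_⟩
  · intro y hy
    exact le_trans (hgrad y (ball_subset_closedBall hy))
      (mul_le_mul_of_nonneg_right hc₂c₁ (Real.sqrt_nonneg _))
  · intro y hy z hz
    have h1 := hlip y (ball_subset_closedBall hy) z (ball_subset_closedBall hz)
    have h2 := hlip z (ball_subset_closedBall hz) y (ball_subset_closedBall hy)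
    rw [abs_sub_le_iff]
    constructor
    · linarith
    · rw [show ‖z - y‖ = ‖y - z‖ from norm_sub_rev _ _]; linarith

/-- If `ψ : U → [0,∞)` is a nonnegative `C²` function on an open set
`U ⊆ ℝⁿ`, then `√ψ` is locally Lipschitz continuous, and the derivative of `ψ` is locally
bounded by a multiple of `√ψ`. -/
theorem stmt15 {n : ℕ} {U : Set (EuclideanSpace ℝ (Fin n))} (hU : IsOpen U)
    (ψ : EuclideanSpace ℝ (Fin n) → ℝ) (hψ0 : ∀ x ∈ U, 0 ≤ ψ x)
    (hψC2 : ContDiffOn ℝ 2 ψ U) :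
    (∀ x ∈ U, ∃ V ∈ 𝓝 x, ∃ L > (0:ℝ), ∀ y ∈ V ∩ U, ∀ z ∈ V ∩ U,
      |Real.sqrt (ψ z) - Real.sqrt (ψ y)| ≤ L * ‖z - y‖) ∧
    (∀ x ∈ U, ∃ V ∈ 𝓝 x, ∃ c > (0:ℝ), ∀ y ∈ V ∩ U,
      ‖fderiv ℝ ψ y‖ ≤ c * Real.sqrt (ψ y)) := by
  constructor
  · intro x hx
    obtain ⟨r, hr, c, hc, hsub, hgrad, hlip⟩ := aux15 hU ψ hψ0 hψC2 x hx
    exact ⟨Metric.ball x r, Metric.ball_mem_nhds x hr, c, hc,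
      fun y hy z hz => hlip y hy.1 z hz.1⟩
  · intro x hx
    obtain ⟨r, hr, c, hc, hsub, hgrad, hlip⟩ := aux15 hU ψ hψ0 hψC2 x hx
    exact ⟨Metric.ball x r, Metric.ball_mem_nhds x hr, c, hc, fun y hy => hgrad y hy.1⟩
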